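/- Let ν ≥ 1, β ∈ (0,1], and let μ > 0, μ̃ > 0, τ > 0, κ > 0 be real numbers satisfying μ·μ̃ ≥ 1. Define μᵉ := (ν·μ + τ·κ)/(ν + 1). If β·μᵉ ≤ τ·κ and β·μᵉ·μ̃ ≤ 1, then μ/(2 − β) ≤ μᵉ ≤ μ/β. -/

import Mathlib

/-- Bounds on the extended complementarity parameter `μᵉ = (ν μ + τ κ)/(ν + 1)`:
if `β μᵉ ≤ τ κ` and `β μᵉ μ̃ ≤ 1`, then `μ/(2 − β) ≤ μᵉ ≤ μ/β`. -/
theorem stmt2 (ν β μ μt τ κ : ℝ) (hν : 1 ≤ ν) (hβ0 : 0 < β) (hβ1 : β ≤ 1)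
    (hμ : 0 < μ) (hμt : 0 < μt) (hτ : 0 < τ) (hκ : 0 < κ)
    (hNT : 1 ≤ μ * μt)
    (hA : β * ((ν * μ + τ * κ) / (ν + 1)) ≤ τ * κ)
    (hB : β * ((ν * μ + τ * κ) / (ν + 1)) * μt ≤ 1) :
    μ / (2 - β) ≤ (ν * μ + τ * κ) / (ν + 1) ∧
    (ν * μ + τ * κ) / (ν + 1) ≤ μ / β := by
  have hν1 : (0:ℝ) < ν + 1 := by linarith
  set e := (ν * μ + τ * κ) / (ν + 1) with he
  have heq : e * (ν + 1) = ν * μ + τ * κ := by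
    rw [he]; exact div_mul_cancel₀ _ hν1.ne'
  have h2β : (0:ℝ) < 2 - β := by linarith
  constructor
  · -- from hA: e(ν+1) - νμ = τκ ≥ βe ⇒ e(ν+1-β) ≥ νμ
    have he0 : 0 < e := by
      rw [he]; positivity
    rw [div_le_iff₀ h2β]
    nlinarith [hA, heq, mul_nonneg (mul_nonneg (by linarith : (0:ℝ) ≤ ν - 1) (by linarith : (0:ℝ) ≤ 1 - β)) he0.le]
  · -- βe μt ≤ 1 ≤ μ μt ⇒ βe ≤ μ
    rw [le_div_iff₀ hβ0]
    have : β * e ≤ μ := by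
      have h := hB.trans hNT
      nlinarith
    linarith
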